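/- The contextual preorder coincides with the simulation preorder: (Γ1;Δ1) ≼_c (Γ2;Δ2) if and only if (Γ1;Δ1) ≼_s (Γ2;Δ2). -/

import Mathlib

/-- Formulas of the linear-logic fragment: atoms, 1, ⊗, ⊤, &, atomic-antecedent ⊸, !. -/
inductive Formula : Type where
  | atom : ℕ → Formula
  | one : Formula
  | tensor : Formula → Formula → Formula
  | top : Formula
  | with_ : Formula → Formula → Formula
  | limp : ℕ → Formula → Formula
  | bang : Formula → Formula
deriving DecidableEq

/-- Contexts are finite multisets of formulas. -/
abbrev Ctx : Type := Multiset Formula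

/-- A process state (Γ;Δ): unrestricted context Γ and linear context Δ. -/
abbrev State : Type := Ctx × Ctx

/-- Composition of states: ((Γ1;Δ1),(Γ2;Δ2)) = (Γ1,Γ2; Δ1,Δ2). -/
def State.comp (s t : State) : State := (s.1 + t.1, s.2 + t.2)

/-- DILL derivability Γ;Δ ⊢ A. -/
inductive Derives : Ctx → Ctx → Formula → Prop where
  | init (Γ : Ctx) (a : ℕ) : Derives Γ {Formula.atom a} (Formula.atom a)
  | clone {Γ Δ : Ctx} {A C : Formula} :
      Derives (A ::ₘ Γ) (A ::ₘ Δ) C → Derives (A ::ₘ Γ) Δ C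
  | tensorR {Γ Δ₁ Δ₂ : Ctx} {A B : Formula} :
      Derives Γ Δ₁ A → Derives Γ Δ₂ B → Derives Γ (Δ₁ + Δ₂) (Formula.tensor A B)
  | tensorL {Γ Δ : Ctx} {A B C : Formula} :
      Derives Γ (A ::ₘ B ::ₘ Δ) C → Derives Γ (Formula.tensor A B ::ₘ Δ) C
  | oneR (Γ : Ctx) : Derives Γ 0 Formula.one
  | oneL {Γ Δ : Ctx} {C : Formula} :
      Derives Γ Δ C → Derives Γ (Formula.one ::ₘ Δ) C
  | withR {Γ Δ : Ctx} {A B : Formula} :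
      Derives Γ Δ A → Derives Γ Δ B → Derives Γ Δ (Formula.with_ A B)
  | withL₁ {Γ Δ : Ctx} {A₁ A₂ C : Formula} :
      Derives Γ (A₁ ::ₘ Δ) C → Derives Γ (Formula.with_ A₁ A₂ ::ₘ Δ) C
  | withL₂ {Γ Δ : Ctx} {A₁ A₂ C : Formula} :
      Derives Γ (A₂ ::ₘ Δ) C → Derives Γ (Formula.with_ A₁ A₂ ::ₘ Δ) C
  | topR (Γ Δ : Ctx) : Derives Γ Δ Formula.top
  | limpR {Γ Δ : Ctx} {a : ℕ} {B : Formula} :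
      Derives Γ (Formula.atom a ::ₘ Δ) B → Derives Γ Δ (Formula.limp a B)
  | limpL {Γ Δ₁ Δ₂ : Ctx} {a : ℕ} {B C : Formula} :
      Derives Γ Δ₁ (Formula.atom a) → Derives Γ (B ::ₘ Δ₂) C →
      Derives Γ (Formula.limp a B ::ₘ (Δ₁ + Δ₂)) C
  | bangR {Γ : Ctx} {A : Formula} :
      Derives Γ 0 A → Derives Γ 0 (Formula.bang A)
  | bangL {Γ Δ : Ctx} {A C : Formula} :
      Derives (A ::ₘ Γ) Δ C → Derives Γ (Formula.bang A ::ₘ Δ) C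

/-- The logical preorder (Γ1;Δ1) ≼ₗ (Γ2;Δ2). -/
def LogicalPre (s t : State) : Prop :=
  ∀ (Γ' Δ' : Ctx) (C : Formula),
    Derives (Γ' + s.1) (Δ' + s.2) C → Derives (Γ' + t.1) (Δ' + t.2) C

/-- The reduction relation ⇝ on process states. -/
inductive Red : State → State → Prop where
  | tensor (Γ Δ : Ctx) (A B : Formula) :
      Red (Γ, Formula.tensor A B ::ₘ Δ) (Γ, A ::ₘ B ::ₘ Δ)
  | one (Γ Δ : Ctx) :
      Red (Γ, Formula.one ::ₘ Δ) (Γ, Δ)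
  | with₁ (Γ Δ : Ctx) (A₁ A₂ : Formula) :
      Red (Γ, Formula.with_ A₁ A₂ ::ₘ Δ) (Γ, A₁ ::ₘ Δ)
  | with₂ (Γ Δ : Ctx) (A₁ A₂ : Formula) :
      Red (Γ, Formula.with_ A₁ A₂ ::ₘ Δ) (Γ, A₂ ::ₘ Δ)
  | comm (Γ Δ : Ctx) (a : ℕ) (B : Formula) :
      Red (Γ, Formula.atom a ::ₘ Formula.limp a B ::ₘ Δ) (Γ, B ::ₘ Δ)
  | bang (Γ Δ : Ctx) (A : Formula) :
      Red (Γ, Formula.bang A ::ₘ Δ) (A ::ₘ Γ, Δ)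
  | clone (Γ Δ : Ctx) (A : Formula) :
      Red (A ::ₘ Γ, Δ) (A ::ₘ Γ, A ::ₘ Δ)

/-- ⇝*, the reflexive-transitive closure of reduction. -/
def RedStar : State → State → Prop := Relation.ReflTransGen Red

/-- Labels of the LTS: τ, send !a, receive ?a. -/
inductive Label : Type where
  | tau : Label
  | send : ℕ → Label
  | recv : ℕ → Label
deriving DecidableEq

/-- The labeled transition system on states. -/
inductive Step : State → Label → State → Prop where
  | send (Γ Δ : Ctx) (a : ℕ) :
      Step (Γ, Formula.atom a ::ₘ Δ) (Label.send a) (Γ, Δ)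
  | recv (Γ Δ : Ctx) (a : ℕ) (B : Formula) :
      Step (Γ, Formula.limp a B ::ₘ Δ) (Label.recv a) (Γ, B ::ₘ Δ)
  | comm {s₁ s₁' s₂ s₂' : State} {a : ℕ} :
      Step s₁ (Label.send a) s₁' → Step s₂ (Label.recv a) s₂' →
      Step (State.comp s₁ s₂) Label.tau (State.comp s₁' s₂')
  | tensor (Γ Δ : Ctx) (A B : Formula) :
      Step (Γ, Formula.tensor A B ::ₘ Δ) Label.tau (Γ, A ::ₘ B ::ₘ Δ)
  | one (Γ Δ : Ctx) :
      Step (Γ, Formula.one ::ₘ Δ) Label.tau (Γ, Δ)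
  | with₁ (Γ Δ : Ctx) (A₁ A₂ : Formula) :
      Step (Γ, Formula.with_ A₁ A₂ ::ₘ Δ) Label.tau (Γ, A₁ ::ₘ Δ)
  | with₂ (Γ Δ : Ctx) (A₁ A₂ : Formula) :
      Step (Γ, Formula.with_ A₁ A₂ ::ₘ Δ) Label.tau (Γ, A₂ ::ₘ Δ)
  | bang (Γ Δ : Ctx) (A : Formula) :
      Step (Γ, Formula.bang A ::ₘ Δ) Label.tau (A ::ₘ Γ, Δ)
  | clone (Γ Δ : Ctx) (A : Formula) :
      Step (A ::ₘ Γ, Δ) Label.tau (A ::ₘ Γ, A ::ₘ Δ)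

/-- ⇒τ, the reflexive-transitive closure of —τ→. -/
def WeakTau : State → State → Prop :=
  Relation.ReflTransGen (fun s t => Step s Label.tau t)

/-- Weak transition ⇒β: for β = τ it is ⇒τ, otherwise ⇒τ—β→⇒τ. -/
def WeakStep (s : State) (β : Label) (t : State) : Prop :=
  match β with
  | Label.tau => WeakTau s t
  | _ => ∃ u v, WeakTau s u ∧ Step u β v ∧ WeakTau v t

/-- A label is a "non-receive" label α (i.e., τ or a send). -/
def Label.isNonRecv : Label → Prop
  | Label.recv _ => False
  | _ => True

/-- A relation on states is a simulation. -/
def IsSimulation (R : State → State → Prop) : Prop :=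
  ∀ s t, R s t →
    (s.2 = 0 → ∃ Γ₂' : Ctx, WeakTau t (Γ₂', 0) ∧ R (s.1, 0) (Γ₂', 0)) ∧
    (∀ s₁ s₂ : State, s = State.comp s₁ s₂ →
      ∃ t₁ t₂ : State, WeakTau t (State.comp t₁ t₂) ∧ R s₁ t₁ ∧ R s₂ t₂) ∧
    (∀ (α : Label) (s' : State), α.isNonRecv → Step s α s' →
      ∃ t', WeakStep t α t' ∧ R s' t') ∧
    (∀ (a : ℕ) (s' : State), Step s (Label.recv a) s' →
      ∃ t', WeakTau (t.1, Formula.atom a ::ₘ t.2) t' ∧ R s' t')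

/-- The simulation preorder ≼ₛ. -/
def SimPre (s t : State) : Prop :=
  ∃ R : State → State → Prop, IsSimulation R ∧ R s t

/-- Strong barb: (Γ;Δ)↓a. -/
def Barb (s : State) (a : ℕ) : Prop := Formula.atom a ∈ s.2

/-- Weak barb: (Γ;Δ)⇓a. -/
def WeakBarb (s : State) (a : ℕ) : Prop := ∃ t, RedStar s t ∧ Barb t a

def BarbPreserving (R : State → State → Prop) : Prop :=
  ∀ s t a, R s t → Barb s a → WeakBarb t a

def ReductionClosed (R : State → State → Prop) : Prop :=
  ∀ s t s', R s t → Red s s' → ∃ t', RedStar t t' ∧ R s' t'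

def Compositional (R : State → State → Prop) : Prop :=
  ∀ s t u, R s t → R (State.comp s u) (State.comp t u)

def PartitionPreserving (R : State → State → Prop) : Prop :=
  ∀ s t, R s t →
    (s.2 = 0 → ∃ Γ₂' : Ctx, RedStar t (Γ₂', 0) ∧ R (s.1, 0) (Γ₂', 0)) ∧
    (∀ s₁ s₂ : State, s = State.comp s₁ s₂ →
      ∃ t₁ t₂ : State, RedStar t (State.comp t₁ t₂) ∧ R s₁ t₁ ∧ R s₂ t₂)

/-- The contextual preorder ≼_c: the largest barb-preserving, reduction-closed,
compositional, partition-preserving relation on states. -/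
def CtxPre (s t : State) : Prop :=
  ∃ R : State → State → Prop,
    BarbPreserving R ∧ ReductionClosed R ∧ Compositional R ∧ PartitionPreserving R ∧ R s t

/-- ⊗Δ: the ⊗-conjunction of all formulas in Δ (1 if Δ is empty). -/
noncomputable def bigTensor (Δ : Ctx) : Formula :=
  Δ.toList.foldr Formula.tensor Formula.one

/-- !Γ: prefix every formula of Γ with !. -/
def bangCtx (Γ : Ctx) : Ctx := Γ.map Formula.bang

namespace LL

/-! ### Multiset helpers -/

lemma add_eq_cons {α} [DecidableEq α] {X Y Z : Multiset α} {A : α} (h : X + Y = A ::ₘ Z) :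
    (∃ X', X = A ::ₘ X' ∧ Z = X' + Y) ∨ ∃ Y', Y = A ::ₘ Y' ∧ Z = X + Y' := by
  have hm : A ∈ X + Y := h ▸ Multiset.mem_cons_self A Z
  rcases Multiset.mem_add.1 hm with hx | hy
  · left
    refine ⟨X.erase A, (Multiset.cons_erase hx).symm, ?_⟩
    have h2 : A ::ₘ (X.erase A + Y) = A ::ₘ Z := by
      rw [← Multiset.cons_add, Multiset.cons_erase hx, h]
    exact ((Multiset.cons_inj_right _).1 h2).symm
  · right
    refine ⟨Y.erase A, (Multiset.cons_erase hy).symm, ?_⟩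
    have h2 : A ::ₘ (X + Y.erase A) = A ::ₘ Z := by
      rw [← Multiset.add_cons, Multiset.cons_erase hy, h]
    exact ((Multiset.cons_inj_right _).1 h2).symm

lemma riesz {α} [DecidableEq α] :
    ∀ {P Q X Y : Multiset α}, P + Q = X + Y →
      ∃ A B C D, P = A + B ∧ Q = C + D ∧ X = A + C ∧ Y = B + D := by
  intro P
  induction P using Multiset.induction with
  | empty =>
    intro Q X Y h
    exact ⟨0, 0, X, Y, by simp, by simpa using h, by simp, by simp⟩
  | cons a P ih =>
    intro Q X Y h
    have h' : X + Y = a ::ₘ (P + Q) := by rw [← h]; simp [Multiset.cons_add]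
    rcases add_eq_cons h' with ⟨X', hX, hPQ⟩ | ⟨Y', hY, hPQ⟩
    · rcases ih (hPQ : P + Q = X' + Y) with ⟨A, B, C, D, h1, h2, h3, h4⟩
      exact ⟨a ::ₘ A, B, C, D, by simp [h1, Multiset.cons_add], h2,
        by simp [hX, h3, Multiset.cons_add], h4⟩
    · rcases ih (hPQ : P + Q = X + Y') with ⟨A, B, C, D, h1, h2, h3, h4⟩
      exact ⟨A, a ::ₘ B, C, D, by simp [h1, Multiset.cons_add, Multiset.add_cons], h2, h3,
        by simp [hY, h4, Multiset.cons_add]⟩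

lemma singleton_eq_cons {α} {a b : α} {s : Multiset α} (h : ({a} : Multiset α) = b ::ₘ s) :
    a = b ∧ s = 0 := by
  rwa [Multiset.singleton_eq_cons_iff] at h

/-! ### Atoms -/

def Formula.atoms : Formula → Finset ℕ
  | Formula.atom a => {a}
  | Formula.one => ∅
  | Formula.tensor A B => Formula.atoms A ∪ Formula.atoms B
  | Formula.top => ∅
  | Formula.with_ A B => Formula.atoms A ∪ Formula.atoms B
  | Formula.limp a B => insert a (Formula.atoms B)
  | Formula.bang A => Formula.atoms A

def ctxAtoms (Γ : Ctx) : Finset ℕ := (Γ.map Formula.atoms).sup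

def State.atoms (s : State) : Finset ℕ := ctxAtoms s.1 ∪ ctxAtoms s.2

lemma ctxAtoms_zero : ctxAtoms 0 = ∅ := rfl

lemma ctxAtoms_cons (A : Formula) (Γ : Ctx) :
    ctxAtoms (A ::ₘ Γ) = Formula.atoms A ∪ ctxAtoms Γ := by
  simp [ctxAtoms, Multiset.sup_cons]

lemma ctxAtoms_add (Γ Δ : Ctx) : ctxAtoms (Γ + Δ) = ctxAtoms Γ ∪ ctxAtoms Δ := by
  simp [ctxAtoms, Multiset.sup_add]

lemma ctxAtoms_singleton (A : Formula) : ctxAtoms {A} = Formula.atoms A := by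
  simp [ctxAtoms]

lemma atoms_of_mem {A : Formula} {Γ : Ctx} (h : A ∈ Γ) : Formula.atoms A ⊆ ctxAtoms Γ := by
  intro x hx
  have : Formula.atoms A ≤ (Γ.map Formula.atoms).sup :=
    Multiset.le_sup (Multiset.mem_map_of_mem _ h)
  exact this hx

lemma State.atoms_comp (s u : State) :
    State.atoms (State.comp s u) = State.atoms s ∪ State.atoms u := by
  simp only [State.atoms, State.comp, ctxAtoms_add]
  ac_rfl

/-! ### Composition basics -/

lemma comp_comm (s t : State) : State.comp s t = State.comp t s := by
  simp [State.comp, add_comm]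

lemma comp_assoc (s t u : State) :
    State.comp (State.comp s t) u = State.comp s (State.comp t u) := by
  simp [State.comp, add_assoc]

lemma comp_zero (s : State) : State.comp s (0, 0) = s := by
  simp [State.comp]

end LL
namespace LL

/-! ### Red lifting -/

lemma red_comp {s s' : State} (u : State) (h : Red s s') :
    Red (State.comp s u) (State.comp s' u) := by
  obtain ⟨G, D⟩ := u
  cases h with
  | tensor Γ Δ A B =>
      simpa [State.comp, Multiset.cons_add] using Red.tensor (Γ + G) (Δ + D) A B
  | one Γ Δ => simpa [State.comp, Multiset.cons_add] using Red.one (Γ + G) (Δ + D)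
  | with₁ Γ Δ A₁ A₂ =>
      simpa [State.comp, Multiset.cons_add] using Red.with₁ (Γ + G) (Δ + D) A₁ A₂
  | with₂ Γ Δ A₁ A₂ =>
      simpa [State.comp, Multiset.cons_add] using Red.with₂ (Γ + G) (Δ + D) A₁ A₂
  | comm Γ Δ a B =>
      simpa [State.comp, Multiset.cons_add] using Red.comm (Γ + G) (Δ + D) a B
  | bang Γ Δ A => simpa [State.comp, Multiset.cons_add] using Red.bang (Γ + G) (Δ + D) A
  | clone Γ Δ A => simpa [State.comp, Multiset.cons_add] using Red.clone (Γ + G) (Δ + D) A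

lemma redStar_comp {s s' : State} (u : State) (h : RedStar s s') :
    RedStar (State.comp s u) (State.comp s' u) := by
  induction h with
  | refl => exact Relation.ReflTransGen.refl
  | tail _ h2 ih => exact ih.tail (red_comp u h2)

/-! ### Red preserves atoms (downwards) -/

lemma red_atoms {s s' : State} (h : Red s s') : State.atoms s' ⊆ State.atoms s := by
  cases h with
  | tensor Γ Δ A B =>
      simp only [State.atoms, ctxAtoms_cons, Formula.atoms]
      intro x hx; simp at hx ⊢; tauto
  | one Γ Δ =>
      simp only [State.atoms, ctxAtoms_cons, Formula.atoms]
      intro x hx; simp at hx ⊢; tauto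
  | with₁ Γ Δ A₁ A₂ =>
      simp only [State.atoms, ctxAtoms_cons, Formula.atoms]
      intro x hx; simp at hx ⊢; tauto
  | with₂ Γ Δ A₁ A₂ =>
      simp only [State.atoms, ctxAtoms_cons, Formula.atoms]
      intro x hx; simp at hx ⊢; tauto
  | comm Γ Δ a B =>
      simp only [State.atoms, ctxAtoms_cons, Formula.atoms]
      intro x hx; simp at hx ⊢; tauto
  | bang Γ Δ A =>
      simp only [State.atoms, ctxAtoms_cons, Formula.atoms]
      intro x hx; simp at hx ⊢; tauto
  | clone Γ Δ A =>
      simp only [State.atoms, ctxAtoms_cons, Formula.atoms]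
      intro x hx; simp at hx ⊢; tauto

lemma redStar_atoms {s s' : State} (h : RedStar s s') : State.atoms s' ⊆ State.atoms s := by
  induction h with
  | refl => exact fun _ h => h
  | tail _ h2 ih => exact fun x hx => ih (red_atoms h2 hx)

/-! ### Red decomposition on composite states -/

/-- Explicit inversion principle for `Red`. -/
lemma red_cases {w z : State} (h : Red w z) :
    (∃ Γ Δ A B, w = (Γ, Formula.tensor A B ::ₘ Δ) ∧ z = (Γ, A ::ₘ B ::ₘ Δ)) ∨
    (∃ Γ Δ, w = (Γ, Formula.one ::ₘ Δ) ∧ z = (Γ, Δ)) ∨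
    (∃ Γ Δ A₁ A₂, w = (Γ, Formula.with_ A₁ A₂ ::ₘ Δ) ∧ z = (Γ, A₁ ::ₘ Δ)) ∨
    (∃ Γ Δ A₁ A₂, w = (Γ, Formula.with_ A₁ A₂ ::ₘ Δ) ∧ z = (Γ, A₂ ::ₘ Δ)) ∨
    (∃ Γ Δ a B, w = (Γ, Formula.atom a ::ₘ Formula.limp a B ::ₘ Δ) ∧ z = (Γ, B ::ₘ Δ)) ∨
    (∃ Γ Δ A, w = (Γ, Formula.bang A ::ₘ Δ) ∧ z = (A ::ₘ Γ, Δ)) ∨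
    (∃ Γ Δ A, w = (A ::ₘ Γ, Δ) ∧ z = (A ::ₘ Γ, A ::ₘ Δ)) := by
  cases h with
  | tensor Γ Δ A B => exact Or.inl ⟨Γ, Δ, A, B, rfl, rfl⟩
  | one Γ Δ => exact Or.inr (Or.inl ⟨Γ, Δ, rfl, rfl⟩)
  | with₁ Γ Δ A₁ A₂ => exact Or.inr (Or.inr (Or.inl ⟨Γ, Δ, A₁, A₂, rfl, rfl⟩))
  | with₂ Γ Δ A₁ A₂ => exact Or.inr (Or.inr (Or.inr (Or.inl ⟨Γ, Δ, A₁, A₂, rfl, rfl⟩)))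
  | comm Γ Δ a B => exact Or.inr (Or.inr (Or.inr (Or.inr (Or.inl ⟨Γ, Δ, a, B, rfl, rfl⟩))))
  | bang Γ Δ A =>
      exact Or.inr (Or.inr (Or.inr (Or.inr (Or.inr (Or.inl ⟨Γ, Δ, A, rfl, rfl⟩)))))
  | clone Γ Δ A =>
      exact Or.inr (Or.inr (Or.inr (Or.inr (Or.inr (Or.inr ⟨Γ, Δ, A, rfl, rfl⟩)))))



lemma red_decomp {s u z : State} (h : Red (State.comp s u) z) :
    (∃ s', Red s s' ∧ z = State.comp s' u) ∨
    (∃ u', Red u u' ∧ z = State.comp s u') ∨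
    (∃ a B Δs Δu, s.2 = Formula.atom a ::ₘ Δs ∧ u.2 = Formula.limp a B ::ₘ Δu ∧
      z = (s.1 + u.1, Δs + (B ::ₘ Δu))) ∨
    (∃ a B Δs Δu, s.2 = Formula.limp a B ::ₘ Δs ∧ u.2 = Formula.atom a ::ₘ Δu ∧
      z = (s.1 + u.1, (B ::ₘ Δs) + Δu)) := by
  obtain ⟨G1, D1⟩ := s
  obtain ⟨G2, D2⟩ := u
  rcases red_cases h with ⟨Γ, Δ, A, B, hw, hz⟩ | ⟨Γ, Δ, hw, hz⟩ | ⟨Γ, Δ, A₁, A₂, hw, hz⟩ |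
    ⟨Γ, Δ, A₁, A₂, hw, hz⟩ | ⟨Γ, Δ, a, B, hw, hz⟩ | ⟨Γ, Δ, A, hw, hz⟩ | ⟨Γ, Δ, A, hw, hz⟩
  all_goals simp only [State.comp, Prod.mk.injEq] at hw
  all_goals obtain ⟨hG, hD⟩ := hw
  · rcases add_eq_cons hD with ⟨X, h1, h2⟩ | ⟨Y, h1, h2⟩
    · left; exact ⟨(G1, A ::ₘ B ::ₘ X), by rw [h1]; exact Red.tensor _ _ _ _,
        by simp [State.comp, hz, hG, h2, Multiset.cons_add]⟩
    · right; left
      exact ⟨(G2, A ::ₘ B ::ₘ Y), by rw [h1]; exact Red.tensor _ _ _ _,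
        by simp [State.comp, hz, hG, h2, Multiset.add_cons]⟩
  · rcases add_eq_cons hD with ⟨X, h1, h2⟩ | ⟨Y, h1, h2⟩
    · left; exact ⟨(G1, X), by rw [h1]; exact Red.one _ _, by simp [State.comp, hz, hG, h2]⟩
    · right; left
      exact ⟨(G2, Y), by rw [h1]; exact Red.one _ _, by simp [State.comp, hz, hG, h2]⟩
  · rcases add_eq_cons hD with ⟨X, h1, h2⟩ | ⟨Y, h1, h2⟩
    · left; exact ⟨(G1, A₁ ::ₘ X), by rw [h1]; exact Red.with₁ _ _ _ _,
        by simp [State.comp, hz, hG, h2, Multiset.cons_add]⟩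
    · right; left
      exact ⟨(G2, A₁ ::ₘ Y), by rw [h1]; exact Red.with₁ _ _ _ _,
        by simp [State.comp, hz, hG, h2, Multiset.add_cons]⟩
  · rcases add_eq_cons hD with ⟨X, h1, h2⟩ | ⟨Y, h1, h2⟩
    · left; exact ⟨(G1, A₂ ::ₘ X), by rw [h1]; exact Red.with₂ _ _ _ _,
        by simp [State.comp, hz, hG, h2, Multiset.cons_add]⟩
    · right; left
      exact ⟨(G2, A₂ ::ₘ Y), by rw [h1]; exact Red.with₂ _ _ _ _,
        by simp [State.comp, hz, hG, h2, Multiset.add_cons]⟩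
  · rcases add_eq_cons hD with ⟨X, h1, h2⟩ | ⟨Y, h1, h2⟩
    · rcases add_eq_cons h2.symm with ⟨X', h3, h4⟩ | ⟨Y', h3, h4⟩
      · left
        exact ⟨(G1, B ::ₘ X'), by rw [h1, h3]; exact Red.comm _ _ _ _,
          by simp [State.comp, hz, hG, h4, Multiset.cons_add]⟩
      · right; right; left
        exact ⟨a, B, X, Y', h1, h3, by simp [hz, hG, h4, Multiset.add_cons]⟩
    · rcases add_eq_cons h2.symm with ⟨X', h3, h4⟩ | ⟨Y', h3, h4⟩
      · right; right; right
        exact ⟨a, B, X', Y, h3, h1, by simp [hz, hG, h4, Multiset.cons_add]⟩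
      · right; left
        exact ⟨(G2, B ::ₘ Y'), by rw [h1, h3]; exact Red.comm _ _ _ _,
          by simp [State.comp, hz, hG, h4, Multiset.add_cons]⟩
  · rcases add_eq_cons hD with ⟨X, h1, h2⟩ | ⟨Y, h1, h2⟩
    · left; exact ⟨(A ::ₘ G1, X), by rw [h1]; exact Red.bang _ _ _,
        by simp [State.comp, hz, hG, h2, Multiset.cons_add]⟩
    · right; left
      exact ⟨(A ::ₘ G2, Y), by rw [h1]; exact Red.bang _ _ _,
        by simp [State.comp, hz, hG, h2, Multiset.add_cons]⟩
  · rcases add_eq_cons hG with ⟨X, h1, h2⟩ | ⟨Y, h1, h2⟩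
    · left
      refine ⟨(G1, A ::ₘ D1), by rw [h1]; exact Red.clone _ _ _, ?_⟩
      simp [State.comp, hz, ← hG, ← hD, Multiset.cons_add]
    · right; left
      refine ⟨(G2, A ::ₘ D2), by rw [h1]; exact Red.clone _ _ _, ?_⟩
      simp [State.comp, hz, ← hG, ← hD, Multiset.add_cons]

end LL
namespace LL

lemma add_singleton {α} (s : Multiset α) (a : α) : s + {a} = a ::ₘ s := by
  have : ({a} : Multiset α) = a ::ₘ 0 := rfl
  rw [this, Multiset.add_cons, add_zero]

/-! ### Step inversions -/

lemma step_send_inv {s z : State} {a : ℕ} (h : Step s (Label.send a) z) :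
    ∃ Δ, s.2 = Formula.atom a ::ₘ Δ ∧ z = (s.1, Δ) := by
  generalize hl : Label.send a = l at h
  cases h with
  | send Γ Δ b => cases hl; exact ⟨Δ, rfl, rfl⟩
  | recv Γ Δ b B => cases hl
  | comm h1 h2 => cases hl
  | tensor Γ Δ A B => cases hl
  | one Γ Δ => cases hl
  | with₁ Γ Δ A₁ A₂ => cases hl
  | with₂ Γ Δ A₁ A₂ => cases hl
  | bang Γ Δ A => cases hl
  | clone Γ Δ A => cases hl

lemma step_recv_inv {s z : State} {a : ℕ} (h : Step s (Label.recv a) z) :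
    ∃ B Δ, s.2 = Formula.limp a B ::ₘ Δ ∧ z = (s.1, B ::ₘ Δ) := by
  generalize hl : Label.recv a = l at h
  cases h with
  | send Γ Δ b => cases hl
  | recv Γ Δ b B => cases hl; exact ⟨B, Δ, rfl, rfl⟩
  | comm h1 h2 => cases hl
  | tensor Γ Δ A B => cases hl
  | one Γ Δ => cases hl
  | with₁ Γ Δ A₁ A₂ => cases hl
  | with₂ Γ Δ A₁ A₂ => cases hl
  | bang Γ Δ A => cases hl
  | clone Γ Δ A => cases hl

/-! ### Step τ = Red -/

lemma red_of_step_tau {s z : State} (h : Step s Label.tau z) : Red s z := by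
  generalize hl : Label.tau = l at h
  cases h with
  | send Γ Δ b => cases hl
  | recv Γ Δ b B => cases hl
  | comm h1 h2 =>
      rcases step_send_inv h1 with ⟨Δ₁, hs1, hz1⟩
      rcases step_recv_inv h2 with ⟨B, Δ₂, hs2, hz2⟩
      rename_i s₁ s₁' s₂ s₂' a
      have hkey : State.comp s₁ s₂ =
          (s₁.1 + s₂.1, Formula.atom a ::ₘ Formula.limp a B ::ₘ (Δ₁ + Δ₂)) := by
        simp [State.comp, hs1, hs2, Multiset.cons_add, Multiset.add_cons, Multiset.cons_swap]
      have hkey2 : State.comp s₁' s₂' = (s₁.1 + s₂.1, B ::ₘ (Δ₁ + Δ₂)) := by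
        simp [State.comp, hz1, hz2, Multiset.add_cons]
      rw [hkey, hkey2]
      exact Red.comm _ _ _ _
  | tensor Γ Δ A B => exact Red.tensor _ _ _ _
  | one Γ Δ => exact Red.one _ _
  | with₁ Γ Δ A₁ A₂ => exact Red.with₁ _ _ _ _
  | with₂ Γ Δ A₁ A₂ => exact Red.with₂ _ _ _ _
  | bang Γ Δ A => exact Red.bang _ _ _
  | clone Γ Δ A => exact Red.clone _ _ _

lemma step_tau_of_red {s z : State} (h : Red s z) : Step s Label.tau z := by
  cases h with
  | tensor Γ Δ A B => exact Step.tensor _ _ _ _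
  | one Γ Δ => exact Step.one _ _
  | with₁ Γ Δ A₁ A₂ => exact Step.with₁ _ _ _ _
  | with₂ Γ Δ A₁ A₂ => exact Step.with₂ _ _ _ _
  | bang Γ Δ A => exact Step.bang _ _ _
  | clone Γ Δ A => exact Step.clone _ _ _
  | comm Γ Δ a B =>
      have h1 : Step (Γ, Formula.atom a ::ₘ Δ) (Label.send a) (Γ, Δ) := Step.send _ _ _
      have h2 : Step ((0 : Ctx), ({Formula.limp a B} : Ctx)) (Label.recv a)
          ((0 : Ctx), (B ::ₘ 0 : Ctx)) := Step.recv _ _ _ _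
      have := Step.comm h1 h2
      have e1 : State.comp (Γ, Formula.atom a ::ₘ Δ) ((0 : Ctx), ({Formula.limp a B} : Ctx))
          = (Γ, Formula.atom a ::ₘ Formula.limp a B ::ₘ Δ) := by
        simp [State.comp, Multiset.cons_add, Multiset.add_cons, add_singleton, Multiset.cons_swap]
      have e2 : State.comp (Γ, Δ) ((0 : Ctx), (B ::ₘ 0 : Ctx)) = (Γ, B ::ₘ Δ) := by
        simp [State.comp, Multiset.add_cons, add_singleton]
      rwa [e1, e2] at this

lemma weakTau_iff_redStar {s z : State} : WeakTau s z ↔ RedStar s z := by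
  constructor
  · intro h; exact Relation.ReflTransGen.mono (fun _ _ => red_of_step_tau) s z h
  · intro h; exact Relation.ReflTransGen.mono (fun _ _ => step_tau_of_red) s z h

/-! ### Lifting steps and weak steps by composition -/

lemma step_send_comp {s s' : State} (u : State) {a : ℕ} (h : Step s (Label.send a) s') :
    Step (State.comp s u) (Label.send a) (State.comp s' u) := by
  rcases step_send_inv h with ⟨Δ, hs, hz⟩
  have e1 : State.comp s u = (s.1 + u.1, Formula.atom a ::ₘ (Δ + u.2)) := by
    simp [State.comp, hs, Multiset.cons_add]
  have e2 : State.comp s' u = (s.1 + u.1, Δ + u.2) := by simp [State.comp, hz]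
  rw [e1, e2]; exact Step.send _ _ _

lemma weakTau_comp {s s' : State} (u : State) (h : WeakTau s s') :
    WeakTau (State.comp s u) (State.comp s' u) :=
  weakTau_iff_redStar.2 (redStar_comp u (weakTau_iff_redStar.1 h))

lemma weakStep_send_comp {s s' : State} (u : State) {a : ℕ}
    (h : WeakStep s (Label.send a) s') :
    WeakStep (State.comp s u) (Label.send a) (State.comp s' u) := by
  rcases h with ⟨v, w, h1, h2, h3⟩
  exact ⟨State.comp v u, State.comp w u, weakTau_comp u h1, step_send_comp u h2,
    weakTau_comp u h3⟩

/-! ### The two stuck lemmas -/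

lemma red_stuck {D : Ctx} {z : State}
    (h : Red ((0 : Ctx), D) z)
    (h1 : ∀ A ∈ D, (∃ a, A = Formula.atom a) ∨ (∃ a B, A = Formula.limp a B))
    (h2 : ∀ a B, Formula.atom a ∈ D → Formula.limp a B ∈ D → False) : False := by
  rcases red_cases h with ⟨Γ, Δ, A, B, hw, hz⟩ | ⟨Γ, Δ, hw, hz⟩ | ⟨Γ, Δ, A₁, A₂, hw, hz⟩ |
    ⟨Γ, Δ, A₁, A₂, hw, hz⟩ | ⟨Γ, Δ, a, B, hw, hz⟩ | ⟨Γ, Δ, A, hw, hz⟩ | ⟨Γ, Δ, A, hw, hz⟩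
  all_goals simp only [Prod.mk.injEq] at hw
  all_goals obtain ⟨hG, hD⟩ := hw
  · rcases h1 _ (hD ▸ Multiset.mem_cons_self _ _) with ⟨a, ha⟩ | ⟨a, B', ha⟩ <;> simp at ha
  · rcases h1 _ (hD ▸ Multiset.mem_cons_self _ _) with ⟨a, ha⟩ | ⟨a, B', ha⟩ <;> simp at ha
  · rcases h1 _ (hD ▸ Multiset.mem_cons_self _ _) with ⟨a, ha⟩ | ⟨a, B', ha⟩ <;> simp at ha
  · rcases h1 _ (hD ▸ Multiset.mem_cons_self _ _) with ⟨a, ha⟩ | ⟨a, B', ha⟩ <;> simp at ha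
  · exact h2 a B (hD ▸ Multiset.mem_cons_self _ _)
      (hD ▸ Multiset.mem_cons_of_mem (Multiset.mem_cons_self _ _))
  · rcases h1 _ (hD ▸ Multiset.mem_cons_self _ _) with ⟨a, ha⟩ | ⟨a, B', ha⟩ <;> simp at ha
  · exact absurd hG.symm (Multiset.cons_ne_zero)

end LL
namespace LL

/-! ### CtxPre enjoys its defining properties -/

lemma ctxPre_barb : BarbPreserving CtxPre := by
  intro s t a ⟨R, hB, _, _, _, hst⟩ hb
  exact hB s t a hst hb

lemma ctxPre_red : ReductionClosed CtxPre := by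
  intro s t s' ⟨R, hB, hR, hC, hP, hst⟩ hred
  rcases hR s t s' hst hred with ⟨t', ht1, ht2⟩
  exact ⟨t', ht1, R, hB, hR, hC, hP, ht2⟩

lemma ctxPre_comp : Compositional CtxPre := by
  intro s t u ⟨R, hB, hR, hC, hP, hst⟩
  exact ⟨R, hB, hR, hC, hP, hC s t u hst⟩

lemma ctxPre_part : PartitionPreserving CtxPre := by
  intro s t ⟨R, hB, hR, hC, hP, hst⟩
  rcases hP s t hst with ⟨h1, h2⟩
  constructor
  · intro hs
    rcases h1 hs with ⟨Γ', hg1, hg2⟩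
    exact ⟨Γ', hg1, R, hB, hR, hC, hP, hg2⟩
  · intro s₁ s₂ hs
    rcases h2 s₁ s₂ hs with ⟨t₁, t₂, hg1, hg2, hg3⟩
    exact ⟨t₁, t₂, hg1, ⟨R, hB, hR, hC, hP, hg2⟩, R, hB, hR, hC, hP, hg3⟩

lemma ctxPre_redStar {s t s' : State} (h : CtxPre s t) (hr : RedStar s s') :
    ∃ t', RedStar t t' ∧ CtxPre s' t' := by
  induction hr generalizing t with
  | refl => exact ⟨t, Relation.ReflTransGen.refl, h⟩
  | @tail b c _ h2 ih =>
      rcases ih h with ⟨t', ht1, ht2⟩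
      rcases ctxPre_red _ _ _ ht2 h2 with ⟨t'', ht3, ht4⟩
      exact ⟨t'', ht1.trans ht3, ht4⟩

/-! ### Freshness -/

lemma exists_fresh (s t : State) (a : ℕ) :
    ∃ c, c ∉ State.atoms s ∧ c ∉ State.atoms t ∧ c ≠ a := by
  rcases Infinite.exists_notMem_finset (State.atoms s ∪ State.atoms t ∪ {a}) with ⟨c, hc⟩
  simp only [Finset.mem_union, Finset.mem_singleton, not_or] at hc
  exact ⟨c, hc.1.1, hc.1.2, hc.2⟩

lemma barb_atoms {s : State} {a : ℕ} (h : Barb s a) : a ∈ State.atoms s := by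
  rcases h with h
  have := atoms_of_mem h
  exact Finset.mem_union_right _ (this (by simp [Formula.atoms]))

/-- A state contextually above a bare token must contain the token atom. -/
lemma token_weakbarb {c : ℕ} {p : State} (h : CtxPre ((0 : Ctx), ({Formula.atom c} : Ctx)) p)
    (hfresh : c ∉ State.atoms p) : False := by
  have hb : Barb ((0 : Ctx), ({Formula.atom c} : Ctx)) c := by
    simp [Barb]
  rcases ctxPre_barb _ _ _ h hb with ⟨p', hp1, hp2⟩
  exact hfresh (redStar_atoms hp1 (barb_atoms hp2))

end LL
namespace LL

/-- Tester formula a ⊸ c. -/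
def Ltest (a c : ℕ) : Formula := Formula.limp a (Formula.atom c)
/-- Discharger formula c ⊸ 1. -/
def Ldis (c : ℕ) : Formula := Formula.limp c Formula.one

lemma mem_atoms_of_atom_mem {c : ℕ} {s : State} (h : Formula.atom c ∈ s.2) :
    c ∈ State.atoms s :=
  Finset.mem_union_right _ (atoms_of_mem h (by simp [Formula.atoms]))

lemma mem_atoms_of_limp_mem {c : ℕ} {B : Formula} {s : State} (h : Formula.limp c B ∈ s.2) :
    c ∈ State.atoms s :=
  Finset.mem_union_right _ (atoms_of_mem h (by simp [Formula.atoms]))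

lemma fresh_comp_left {c : ℕ} {y₁ y₂ : State} (h : c ∉ State.atoms (State.comp y₁ y₂)) :
    c ∉ State.atoms y₁ := by
  rw [State.atoms_comp] at h
  exact fun hc => h (Finset.mem_union_left _ hc)

lemma fresh_comp_right {c : ℕ} {y₁ y₂ : State} (h : c ∉ State.atoms (State.comp y₁ y₂)) :
    c ∉ State.atoms y₂ := by
  rw [State.atoms_comp] at h
  exact fun hc => h (Finset.mem_union_right _ hc)

/-! ### Inversion for the small tester states -/

lemma red_pairCL {c : ℕ} {u' : State}
    (h : Red ((0 : Ctx), Formula.atom c ::ₘ ({Ldis c} : Ctx)) u') :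
    u' = ((0 : Ctx), ({Formula.one} : Ctx)) := by
  rcases red_cases h with ⟨Γ, Δ, A, B, hw, hz⟩ | ⟨Γ, Δ, hw, hz⟩ | ⟨Γ, Δ, A₁, A₂, hw, hz⟩ |
    ⟨Γ, Δ, A₁, A₂, hw, hz⟩ | ⟨Γ, Δ, a, B, hw, hz⟩ | ⟨Γ, Δ, A, hw, hz⟩ | ⟨Γ, Δ, A, hw, hz⟩
  all_goals simp only [Prod.mk.injEq] at hw
  all_goals obtain ⟨hG, hD⟩ := hw
  · have := hD ▸ Multiset.mem_cons_self (Formula.tensor A B) Δ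
    simp [Ldis] at this
  · have := hD ▸ Multiset.mem_cons_self Formula.one Δ
    simp [Ldis] at this
  · have := hD ▸ Multiset.mem_cons_self (Formula.with_ A₁ A₂) Δ
    simp [Ldis] at this
  · have := hD ▸ Multiset.mem_cons_self (Formula.with_ A₁ A₂) Δ
    simp [Ldis] at this
  · have h1 := hD ▸ Multiset.mem_cons_self (Formula.atom a) (Formula.limp a B ::ₘ Δ)
    have hac : a = c := by simp [Ldis] at h1; exact h1
    subst hac
    have h2 : ({Ldis a} : Ctx) = Formula.limp a B ::ₘ Δ :=
      (Multiset.cons_inj_right _).1 (by rw [hD])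
    rw [Multiset.singleton_eq_cons_iff] at h2
    obtain ⟨h3, h4⟩ := h2
    have hB : B = Formula.one := by simpa [Ldis] using h3.symm
    rw [hz, ← hG, hB, h4]
    rfl
  · have := hD ▸ Multiset.mem_cons_self (Formula.bang A) Δ
    simp [Ldis] at this
  · exact absurd hG (by simp)

lemma red_one_inv {u' : State} (h : Red ((0 : Ctx), ({Formula.one} : Ctx)) u') :
    u' = ((0 : Ctx), (0 : Ctx)) := by
  rcases red_cases h with ⟨Γ, Δ, A, B, hw, hz⟩ | ⟨Γ, Δ, hw, hz⟩ | ⟨Γ, Δ, A₁, A₂, hw, hz⟩ |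
    ⟨Γ, Δ, A₁, A₂, hw, hz⟩ | ⟨Γ, Δ, a, B, hw, hz⟩ | ⟨Γ, Δ, A, hw, hz⟩ | ⟨Γ, Δ, A, hw, hz⟩
  all_goals simp only [Prod.mk.injEq] at hw
  all_goals obtain ⟨hG, hD⟩ := hw
  · have := hD ▸ Multiset.mem_cons_self (Formula.tensor A B) Δ
    simp at this
  · rw [Multiset.singleton_eq_cons_iff] at hD
    rw [hz, ← hG, hD.2]
  · have := hD ▸ Multiset.mem_cons_self (Formula.with_ A₁ A₂) Δ
    simp at this
  · have := hD ▸ Multiset.mem_cons_self (Formula.with_ A₁ A₂) Δ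
    simp at this
  · have := hD ▸ Multiset.mem_cons_self (Formula.atom a) (Formula.limp a B ::ₘ Δ)
    simp at this
  · have := hD ▸ Multiset.mem_cons_self (Formula.bang A) Δ
    simp at this
  · exact absurd hG (by simp)

/-! ### SendsTo -/

/-- `x` can weakly send `a` and then reduce to `y`. -/
def SendsTo (a : ℕ) (x y : State) : Prop :=
  ∃ X D, RedStar x (X, Formula.atom a ::ₘ D) ∧ RedStar (X, D) y

lemma sendsTo_tail {a : ℕ} {x y y' : State} (h : SendsTo a x y) (hr : Red y y') :
    SendsTo a x y' := by
  rcases h with ⟨X, D, h1, h2⟩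
  exact ⟨X, D, h1, h2.tail hr⟩

/-! ### The discharge invariant -/

def InvD (c : ℕ) (w z : State) : Prop :=
  (∃ y, RedStar w y ∧ c ∉ State.atoms y ∧
    z = State.comp y ((0 : Ctx), Formula.atom c ::ₘ ({Ldis c} : Ctx))) ∨
  (∃ y, RedStar w y ∧ c ∉ State.atoms y ∧ z = State.comp y ((0 : Ctx), ({Formula.one} : Ctx))) ∨
  (∃ y, RedStar w y ∧ c ∉ State.atoms y ∧ z = y)

lemma invD_step {c : ℕ} {w z z' : State} (hz : InvD c w z) (h : Red z z') : InvD c w z' := by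
  rcases hz with ⟨y, h1, h2, rfl⟩ | ⟨y, h1, h2, rfl⟩ | ⟨y, h1, h2, rfl⟩
  · rcases red_decomp h with ⟨s', hred, rfl⟩ | ⟨u', hred, rfl⟩ |
      ⟨a, B, Δs, Δu, hs, hu, rfl⟩ | ⟨a, B, Δs, Δu, hs, hu, rfl⟩
    · exact Or.inl ⟨s', h1.tail hred, fun hc => h2 (red_atoms hred hc), rfl⟩
    · rw [red_pairCL hred]
      exact Or.inr (Or.inl ⟨y, h1, h2, rfl⟩)
    · -- the token pair offers limp a B : must be Ldis c, so a = c, atom c ∈ y.2 : contra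
      exfalso
      have hm : Formula.limp a B ∈ Formula.atom c ::ₘ ({Ldis c} : Ctx) := by
        have := Multiset.mem_cons_self (Formula.limp a B) Δu
        rwa [← hu] at this
      have hac : a = c := by
        rcases Multiset.mem_cons.1 hm with h' | h'
        · cases h'
        · simp [Ldis] at h'; exact h'.1
      subst hac
      exact h2 (mem_atoms_of_atom_mem (hs ▸ Multiset.mem_cons_self _ _))
    · -- the token pair offers atom a : a = c, so limp c B ∈ y.2 : contra
      exfalso
      have hm : Formula.atom a ∈ Formula.atom c ::ₘ ({Ldis c} : Ctx) := by
        have := Multiset.mem_cons_self (Formula.atom a) Δu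
        rwa [← hu] at this
      have hac : a = c := by
        rcases Multiset.mem_cons.1 hm with h' | h'
        · cases h'; rfl
        · simp [Ldis] at h'
      subst hac
      exact h2 (mem_atoms_of_limp_mem (hs ▸ Multiset.mem_cons_self _ _))
  · rcases red_decomp h with ⟨s', hred, rfl⟩ | ⟨u', hred, rfl⟩ |
      ⟨a, B, Δs, Δu, hs, hu, rfl⟩ | ⟨a, B, Δs, Δu, hs, hu, rfl⟩
    · exact Or.inr (Or.inl ⟨s', h1.tail hred, fun hc => h2 (red_atoms hred hc), rfl⟩)
    · rw [red_one_inv hred, comp_zero]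
      exact Or.inr (Or.inr ⟨y, h1, h2, rfl⟩)
    · exfalso
      have hm : Formula.limp a B ∈ ({Formula.one} : Ctx) := by
        have := Multiset.mem_cons_self (Formula.limp a B) Δu
        rwa [← hu] at this
      simp at hm
    · exfalso
      have hm : Formula.atom a ∈ ({Formula.one} : Ctx) := by
        have := Multiset.mem_cons_self (Formula.atom a) Δu
        rwa [← hu] at this
      simp at hm
  · exact Or.inr (Or.inr ⟨_, h1.tail h, fun hc => h2 (red_atoms h hc), rfl⟩)

lemma invD_rtg {c : ℕ} {w z z' : State} (hz : InvD c w z) (h : RedStar z z') : InvD c w z' := by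
  induction h with
  | refl => exact hz
  | tail _ h2 ih => exact invD_step ih h2

lemma invD_final {c : ℕ} {w : State} {Θ : Ctx} (h : InvD c w (Θ, (0 : Ctx))) :
    RedStar w (Θ, (0 : Ctx)) := by
  rcases h with ⟨y, h1, h2, h3⟩ | ⟨y, h1, h2, h3⟩ | ⟨y, h1, h2, h3⟩
  · exfalso
    have : (0 : Ctx) = y.2 + (Formula.atom c ::ₘ ({Ldis c} : Ctx)) := congrArg Prod.snd h3
    rw [Multiset.add_cons] at this
    exact Multiset.cons_ne_zero this.symm
  · exfalso
    have : (0 : Ctx) = y.2 + ({Formula.one} : Ctx) := congrArg Prod.snd h3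
    rw [add_singleton] at this
    exact Multiset.cons_ne_zero this.symm
  · exact h3 ▸ h1

end LL
namespace LL

/-! ### Red is stuck on the pure-tester states -/

lemma red_Ltest_stuck {a c : ℕ} {u' : State}
    (h : Red ((0 : Ctx), ({Ltest a c} : Ctx)) u') : False := by
  apply red_stuck h
  · intro A hA
    rw [Multiset.mem_singleton] at hA
    exact Or.inr ⟨a, Formula.atom c, hA⟩
  · intro a' B h1 h2
    rw [Multiset.mem_singleton] at h1
    cases h1
lemma red_token_stuck {c : ℕ} {u' : State}
    (h : Red ((0 : Ctx), ({Formula.atom c} : Ctx)) u') : False := by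
  apply red_stuck h
  · intro A hA
    rw [Multiset.mem_singleton] at hA
    exact Or.inl ⟨c, hA⟩
  · intro a' B h1 h2
    rw [Multiset.mem_singleton] at h2
    cases h2

lemma red_LL_stuck {a c : ℕ} {u' : State}
    (h : Red ((0 : Ctx), Ltest a c ::ₘ ({Ldis c} : Ctx)) u') : False := by
  apply red_stuck h
  · intro A hA
    rcases Multiset.mem_cons.1 hA with h' | h'
    · exact Or.inr ⟨a, Formula.atom c, h'⟩
    · rw [Multiset.mem_singleton] at h'
      exact Or.inr ⟨c, Formula.one, h'⟩
  · intro a' B h1 h2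
    rcases Multiset.mem_cons.1 h1 with h' | h'
    · cases h'
    · rw [Multiset.mem_singleton] at h'
      cases h'

/-! ### The tester invariant (single tester a ⊸ c) -/

def InvQ (a c : ℕ) (t z : State) : Prop :=
  (∃ y, RedStar t y ∧ c ∉ State.atoms y ∧
    z = State.comp y ((0 : Ctx), ({Ltest a c} : Ctx))) ∨
  (∃ y, SendsTo a t y ∧ c ∉ State.atoms y ∧
    z = State.comp y ((0 : Ctx), ({Formula.atom c} : Ctx)))

lemma invQ_step {a c : ℕ} {t z z' : State} (hz : InvQ a c t z) (h : Red z z') :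
    InvQ a c t z' := by
  rcases hz with ⟨y, h1, h2, rfl⟩ | ⟨y, h1, h2, rfl⟩
  · rcases red_decomp h with ⟨s', hred, rfl⟩ | ⟨u', hred, rfl⟩ |
      ⟨a', B, Δs, Δu, hs, hu, rfl⟩ | ⟨a', B, Δs, Δu, hs, hu, rfl⟩
    · exact Or.inl ⟨s', h1.tail hred, fun hc => h2 (red_atoms hred hc), rfl⟩
    · exact absurd hred red_Ltest_stuck
    · -- tester consumed : a' = a, B = atom c
      have hu' : ({Ltest a c} : Ctx) = Formula.limp a' B ::ₘ Δu := hu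
      rw [Multiset.singleton_eq_cons_iff] at hu'
      obtain ⟨h3, h4⟩ := hu'
      have h3' : Formula.limp a (Formula.atom c) = Formula.limp a' B := h3
      injection h3' with e1 e2
      subst e1; subst e2
      have hy : y = (y.1, Formula.atom a ::ₘ Δs) := by rw [← hs]
      have hfr : c ∉ State.atoms (y.1, Δs) := by
        intro hc
        apply h2
        have hsub : ctxAtoms Δs ⊆ ctxAtoms y.2 := by
          rw [hs, ctxAtoms_cons]; exact Finset.subset_union_right
        rcases Finset.mem_union.1 hc with h' | h'
        · exact Finset.mem_union_left _ h'
        · exact Finset.mem_union_right _ (hsub h')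
      refine Or.inr ⟨(y.1, Δs), ⟨y.1, Δs, hy ▸ h1, Relation.ReflTransGen.refl⟩, hfr, ?_⟩
      rw [h4]
      simp [State.comp, Multiset.add_cons, add_singleton]
    · -- tester side offers an atom : impossible
      exfalso
      have hu' : ({Ltest a c} : Ctx) = Formula.atom a' ::ₘ Δu := hu
      rw [Multiset.singleton_eq_cons_iff] at hu'
      exact absurd hu'.1 (by simp [Ltest])
  · rcases red_decomp h with ⟨s', hred, rfl⟩ | ⟨u', hred, rfl⟩ |
      ⟨a', B, Δs, Δu, hs, hu, rfl⟩ | ⟨a', B, Δs, Δu, hs, hu, rfl⟩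
    · exact Or.inr ⟨s', sendsTo_tail h1 hred, fun hc => h2 (red_atoms hred hc), rfl⟩
    · exact absurd hred red_token_stuck
    · exfalso
      have hu' : ({Formula.atom c} : Ctx) = Formula.limp a' B ::ₘ Δu := hu
      rw [Multiset.singleton_eq_cons_iff] at hu'
      exact absurd hu'.1 (by simp)
    · exfalso
      have hu' : ({Formula.atom c} : Ctx) = Formula.atom a' ::ₘ Δu := hu
      rw [Multiset.singleton_eq_cons_iff] at hu'
      have hac : a' = c := by
        have := hu'.1
        simp at this
        exact this.symm
      subst hac
      exact h2 (mem_atoms_of_limp_mem (hs ▸ Multiset.mem_cons_self _ _))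

lemma invQ_rtg {a c : ℕ} {t z z' : State} (hz : InvQ a c t z) (h : RedStar z z') :
    InvQ a c t z' := by
  induction h with
  | refl => exact hz
  | tail _ h2 ih => exact invQ_step ih h2

lemma chainQ {a c : ℕ} {t z : State} (hc : c ∉ State.atoms t)
    (h : RedStar (State.comp t ((0 : Ctx), ({Ltest a c} : Ctx))) z) : InvQ a c t z :=
  invQ_rtg (Or.inl ⟨t, Relation.ReflTransGen.refl, hc, rfl⟩) h

/-! ### The full discharge invariant (tester + discharger) -/

def InvE (a c : ℕ) (x z : State) : Prop :=
  (∃ y, RedStar x y ∧ c ∉ State.atoms y ∧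
    z = State.comp y ((0 : Ctx), Ltest a c ::ₘ ({Ldis c} : Ctx))) ∨
  (∃ X D, RedStar x (X, Formula.atom a ::ₘ D) ∧ InvD c (X, D) z)

lemma invE_step {a c : ℕ} {x z z' : State} (hz : InvE a c x z) (h : Red z z') :
    InvE a c x z' := by
  rcases hz with ⟨y, h1, h2, rfl⟩ | ⟨X, D, h1, h2⟩
  · rcases red_decomp h with ⟨s', hred, rfl⟩ | ⟨u', hred, rfl⟩ |
      ⟨a', B, Δs, Δu, hs, hu, rfl⟩ | ⟨a', B, Δs, Δu, hs, hu, rfl⟩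
    · exact Or.inl ⟨s', h1.tail hred, fun hc => h2 (red_atoms hred hc), rfl⟩
    · exact absurd hred red_LL_stuck
    · -- a limp was consumed from the tester pair
      have hu' : Ltest a c ::ₘ ({Ldis c} : Ctx) = Formula.limp a' B ::ₘ Δu := hu
      rcases Multiset.cons_eq_cons.1 hu' with ⟨h3, h4⟩ | ⟨h3, cs, h4, h5⟩
      · -- it was the tester : transition to InvD
        have h3' : Formula.limp a (Formula.atom c) = Formula.limp a' B := h3
        injection h3' with e1 e2
        subst e1; subst e2
        have hy : y = (y.1, Formula.atom a ::ₘ Δs) := by rw [← hs]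
        refine Or.inr ⟨y.1, Δs, hy ▸ h1, Or.inl ⟨(y.1, Δs), Relation.ReflTransGen.refl, ?_, ?_⟩⟩
        · intro hc
          apply h2
          have : ctxAtoms Δs ⊆ ctxAtoms y.2 := by
            rw [hs, ctxAtoms_cons]; exact Finset.subset_union_right
          rcases Finset.mem_union.1 hc with h' | h'
          · exact Finset.mem_union_left _ h'
          · exact Finset.mem_union_right _ (this h')
        · rw [← h4]
          simp [State.comp, Multiset.add_cons, add_singleton]
      · -- it was the discharger : needs atom c from y, contradiction
        exfalso
        have h6 : Ldis c = Formula.limp a' B := by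
          rw [Multiset.singleton_eq_cons_iff] at h4
          exact h4.1
        have h6' : Formula.limp c Formula.one = Formula.limp a' B := h6
        injection h6' with e1 e2
        subst e1
        exact h2 (mem_atoms_of_atom_mem (hs ▸ Multiset.mem_cons_self _ _))
    · -- the tester pair offers an atom : impossible
      exfalso
      have hu' : Ltest a c ::ₘ ({Ldis c} : Ctx) = Formula.atom a' ::ₘ Δu := hu
      rcases Multiset.cons_eq_cons.1 hu' with ⟨h3, h4⟩ | ⟨h3, cs, h4, h5⟩
      · exact absurd h3 (by simp [Ltest])
      · rw [Multiset.singleton_eq_cons_iff] at h4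
        exact absurd h4.1 (by simp [Ldis])
  · exact Or.inr ⟨X, D, h1, invD_step h2 h⟩

lemma invE_rtg {a c : ℕ} {x z z' : State} (hz : InvE a c x z)
    (h : RedStar z z') : InvE a c x z' := by
  induction h with
  | refl => exact hz
  | tail _ h2 ih => exact invE_step ih h2

lemma invE_final {a c : ℕ} {x : State} {Θ : Ctx} (h : InvE a c x (Θ, (0 : Ctx))) :
    SendsTo a x (Θ, (0 : Ctx)) := by
  rcases h with ⟨y, h1, h2, h3⟩ | ⟨X, D, h1, h2⟩
  · exfalso
    have : (0 : Ctx) = y.2 + (Ltest a c ::ₘ ({Ldis c} : Ctx)) := congrArg Prod.snd h3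
    rw [Multiset.add_cons] at this
    exact Multiset.cons_ne_zero this.symm
  · exact ⟨X, D, h1, invD_final h2⟩

end LL
namespace LL

/-- Key lemma: a contextual upper bound of a sender can weakly send,
keeping a contextual upper bound of the continuation, up to pure unrestricted junk. -/
lemma send_match {Γ Δ : Ctx} {t : State} {a : ℕ}
    (h : CtxPre (Γ, Formula.atom a ::ₘ Δ) t) :
    ∃ q Θ, WeakStep t (Label.send a) (State.comp (Θ, (0 : Ctx)) q) ∧ CtxPre (Γ, Δ) q := by
  obtain ⟨c, hcs, hct, hca⟩ := exists_fresh (Γ, Formula.atom a ::ₘ Δ) t a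
  -- compose with the tester a ⊸ c
  have h1 : CtxPre (State.comp (Γ, Formula.atom a ::ₘ Δ) ((0 : Ctx), ({Ltest a c} : Ctx)))
      (State.comp t ((0 : Ctx), ({Ltest a c} : Ctx))) := ctxPre_comp _ _ _ h
  have hred : Red (State.comp (Γ, Formula.atom a ::ₘ Δ) ((0 : Ctx), ({Ltest a c} : Ctx)))
      (Γ, Formula.atom c ::ₘ Δ) := by
    have := Red.comm Γ Δ a (Formula.atom c)
    have e : State.comp (Γ, Formula.atom a ::ₘ Δ) ((0 : Ctx), ({Ltest a c} : Ctx))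
        = (Γ, Formula.atom a ::ₘ Formula.limp a (Formula.atom c) ::ₘ Δ) := by
      simp [State.comp, Ltest, Multiset.cons_add, add_singleton, Multiset.cons_swap]
    rw [e]; exact this
  obtain ⟨V, hV1, hV2⟩ := ctxPre_red _ _ _ h1 hred
  -- partition (Γ, c ::ₘ Δ) as token ∘ (Γ, Δ)
  have hpart : (Γ, Formula.atom c ::ₘ Δ) =
      State.comp ((0 : Ctx), ({Formula.atom c} : Ctx)) (Γ, Δ) := by
    simp [State.comp, Multiset.singleton_add]
  obtain ⟨p, q, hpq1, hp, hq⟩ := ((ctxPre_part _ _ hV2).2 _ _ hpart)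
  -- the full chain from t ∘ tester to p ∘ q
  have hchain : RedStar (State.comp t ((0 : Ctx), ({Ltest a c} : Ctx))) (State.comp p q) :=
    hV1.trans hpq1
  have hInv := chainQ hct hchain
  -- discharge test on p
  have hd1 : CtxPre (State.comp ((0 : Ctx), ({Formula.atom c} : Ctx))
      ((0 : Ctx), ({Ldis c} : Ctx))) (State.comp p ((0 : Ctx), ({Ldis c} : Ctx))) :=
    ctxPre_comp _ _ _ hp
  have hd2 : Red (State.comp ((0 : Ctx), ({Formula.atom c} : Ctx))
      ((0 : Ctx), ({Ldis c} : Ctx))) ((0 : Ctx), ({Formula.one} : Ctx)) := by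
    have := Red.comm (0 : Ctx) (0 : Ctx) c Formula.one
    have e : State.comp ((0 : Ctx), ({Formula.atom c} : Ctx)) ((0 : Ctx), ({Ldis c} : Ctx))
        = ((0 : Ctx), Formula.atom c ::ₘ Formula.limp c Formula.one ::ₘ (0 : Ctx)) := by
      simp [State.comp, Ldis, Multiset.singleton_add]
    rw [e]; exact this
  obtain ⟨r₁, hr11, hr12⟩ := ctxPre_red _ _ _ hd1 hd2
  have hd3 : Red ((0 : Ctx), ({Formula.one} : Ctx)) ((0 : Ctx), (0 : Ctx)) := by
    have := Red.one (0 : Ctx) (0 : Ctx)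
    simpa using this
  obtain ⟨r₂, hr21, hr22⟩ := ctxPre_red _ _ _ hr12 hd3
  obtain ⟨Θ, hΘ1, _⟩ := (ctxPre_part _ _ hr22).1 rfl
  have hπ : RedStar (State.comp p ((0 : Ctx), ({Ldis c} : Ctx))) (Θ, (0 : Ctx)) :=
    (hr11.trans hr21).trans hΘ1
  -- now case on the invariant at p ∘ q
  rcases hInv with ⟨y, hy1, hy2, hy3⟩ | ⟨y, hy1, hy2, hy3⟩
  · -- tester still intact; must be inside p (else p could never emit the barb c)
    have hD : p.2 + q.2 = Ltest a c ::ₘ y.2 := by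
      have := congrArg Prod.snd hy3
      simpa [State.comp, add_singleton] using this
    have hG : p.1 + q.1 = y.1 := by
      have := congrArg Prod.fst hy3
      simpa [State.comp] using this
    rcases add_eq_cons hD with ⟨P, hP1, hP2⟩ | ⟨Q, hQ1, hQ2⟩
    · -- tester in p
      have hfr : c ∉ State.atoms (p.1, P) := by
        intro hc
        apply hy2
        rcases Finset.mem_union.1 hc with h' | h'
        · exact Finset.mem_union_left _
            (by rw [← hG, ctxAtoms_add]; exact Finset.mem_union_left _ h')
        · refine Finset.mem_union_right _ ?_
          rw [hP2, ctxAtoms_add]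
          exact Finset.mem_union_left _ h'
      have hpe : State.comp p ((0 : Ctx), ({Ldis c} : Ctx)) =
          State.comp (p.1, P) ((0 : Ctx), Ltest a c ::ₘ ({Ldis c} : Ctx)) := by
        simp [State.comp, hP1, Multiset.add_cons, Multiset.cons_add, add_singleton,
          Multiset.cons_swap]
      have hE := invE_rtg (Or.inl ⟨(p.1, P), Relation.ReflTransGen.refl, hfr, rfl⟩)
        (hpe ▸ hπ)
      obtain ⟨X, D, hX1, hX2⟩ := invE_final hE
      have hyq : y = State.comp (p.1, P) q := by
        rw [Prod.ext_iff]
        exact ⟨by simpa [State.comp] using hG.symm, by simpa [State.comp] using hP2⟩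
      refine ⟨q, Θ, ?_, hq⟩
      have s1 : RedStar t (State.comp (p.1, P) q) := hyq ▸ hy1
      have s2 : RedStar (State.comp (p.1, P) q) (State.comp (X, Formula.atom a ::ₘ D) q) :=
        redStar_comp q hX1
      have s3 : Step (State.comp (X, Formula.atom a ::ₘ D) q) (Label.send a)
          (State.comp (X, D) q) := step_send_comp q (Step.send X D a)
      have s4 : RedStar (State.comp (X, D) q) (State.comp (Θ, (0 : Ctx)) q) :=
        redStar_comp q hX2
      exact ⟨_, _, weakTau_iff_redStar.2 (s1.trans s2), s3, weakTau_iff_redStar.2 s4⟩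
    · -- tester in q : then c is fresh for p, contradicting the barb on c
      exfalso
      have hfr : c ∉ State.atoms p := by
        intro hc
        apply hy2
        rcases Finset.mem_union.1 hc with h' | h'
        · exact Finset.mem_union_left _
            (by rw [← hG, ctxAtoms_add]; exact Finset.mem_union_left _ h')
        · refine Finset.mem_union_right _ ?_
          rw [hQ2, ctxAtoms_add]
          exact Finset.mem_union_left _ h'
      exact token_weakbarb hp hfr
  · -- the send already happened : the token is around
    have hD : p.2 + q.2 = Formula.atom c ::ₘ y.2 := by
      have := congrArg Prod.snd hy3
      simpa [State.comp, add_singleton] using this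
    have hG : p.1 + q.1 = y.1 := by
      have := congrArg Prod.fst hy3
      simpa [State.comp] using this
    rcases add_eq_cons hD with ⟨P, hP1, hP2⟩ | ⟨Q, hQ1, hQ2⟩
    · -- token in p
      have hfr : c ∉ State.atoms (p.1, P) := by
        intro hc
        apply hy2
        rcases Finset.mem_union.1 hc with h' | h'
        · exact Finset.mem_union_left _
            (by rw [← hG, ctxAtoms_add]; exact Finset.mem_union_left _ h')
        · refine Finset.mem_union_right _ ?_
          rw [hP2, ctxAtoms_add]
          exact Finset.mem_union_left _ h'
      have hpe : State.comp p ((0 : Ctx), ({Ldis c} : Ctx)) =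
          State.comp (p.1, P) ((0 : Ctx), Formula.atom c ::ₘ ({Ldis c} : Ctx)) := by
        simp [State.comp, hP1, Multiset.add_cons, Multiset.cons_add, add_singleton,
          Multiset.cons_swap]
      have hdis : RedStar (p.1, P) (Θ, (0 : Ctx)) :=
        invD_final (invD_rtg (Or.inl ⟨(p.1, P), Relation.ReflTransGen.refl, hfr, rfl⟩)
          (hpe ▸ hπ))
      have hyq : y = State.comp (p.1, P) q := by
        rw [Prod.ext_iff]
        exact ⟨by simpa [State.comp] using hG.symm, by simpa [State.comp] using hP2⟩
      obtain ⟨X, D, k1, k2⟩ := hy1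
      refine ⟨q, Θ, ?_, hq⟩
      have s3 : Step (X, Formula.atom a ::ₘ D) (Label.send a) (X, D) := Step.send X D a
      have s4 : RedStar (X, D) (State.comp (Θ, (0 : Ctx)) q) := by
        rw [hyq] at k2
        exact k2.trans (redStar_comp q hdis)
      exact ⟨_, _, weakTau_iff_redStar.2 k1, s3, weakTau_iff_redStar.2 s4⟩
    · -- token in q : contradiction
      exfalso
      have hfr : c ∉ State.atoms p := by
        intro hc
        apply hy2
        rcases Finset.mem_union.1 hc with h' | h'
        · exact Finset.mem_union_left _
            (by rw [← hG, ctxAtoms_add]; exact Finset.mem_union_left _ h')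
        · refine Finset.mem_union_right _ ?_
          rw [hQ2, ctxAtoms_add]
          exact Finset.mem_union_left _ h'
      exact token_weakbarb hp hfr

end LL
namespace LL

/-- Candidate simulation: contextual preorder up to pure unrestricted junk on the right. -/
def RJunk (x y : State) : Prop :=
  ∃ y₀ Θ, y = State.comp y₀ (Θ, (0 : Ctx)) ∧ CtxPre x y₀

lemma comp_rotate (aa bb : State) (Θ : Ctx) :
    State.comp (State.comp aa bb) (Θ, (0 : Ctx)) =
    State.comp (State.comp aa (Θ, (0 : Ctx))) bb := by
  refine Prod.ext ?_ ?_ <;> simp [State.comp] <;> ac_rfl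

lemma rjunk_isSimulation : IsSimulation RJunk := by
  intro x y ⟨y₀, Θ0, hy, hx⟩
  refine ⟨?_, ?_, ?_, ?_⟩
  · -- empty linear context
    intro hs
    obtain ⟨G, hg1, hg2⟩ := (ctxPre_part _ _ hx).1 hs
    refine ⟨G + Θ0, ?_, ⟨(G, 0), Θ0, by simp [State.comp], hg2⟩⟩
    have := redStar_comp (Θ0, (0 : Ctx)) hg1
    rw [← hy] at this
    have e : State.comp (G, (0 : Ctx)) (Θ0, (0 : Ctx)) = (G + Θ0, (0 : Ctx)) := by
      simp [State.comp]
    rw [e] at this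
    exact weakTau_iff_redStar.2 this
  · -- partition
    intro s₁ s₂ hsplit
    obtain ⟨t₁, t₂, hg1, hg2, hg3⟩ := (ctxPre_part _ _ hx).2 s₁ s₂ hsplit
    refine ⟨State.comp t₁ (Θ0, (0 : Ctx)), t₂, ?_, ⟨t₁, Θ0, rfl, hg2⟩,
      ⟨t₂, 0, by rw [comp_zero], hg3⟩⟩
    have := redStar_comp (Θ0, (0 : Ctx)) hg1
    rw [← hy, comp_rotate] at this
    exact weakTau_iff_redStar.2 this
  · -- τ and send
    rintro α x' hα hstep
    cases α with
    | tau =>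
        obtain ⟨y₀', r1, r2⟩ := ctxPre_red _ _ _ hx (red_of_step_tau hstep)
        refine ⟨State.comp y₀' (Θ0, (0 : Ctx)), ?_, ⟨y₀', Θ0, rfl, r2⟩⟩
        have := redStar_comp (Θ0, (0 : Ctx)) r1
        rw [← hy] at this
        exact weakTau_iff_redStar.2 this
    | send a =>
        obtain ⟨Δ, hx2, hx'⟩ := step_send_inv hstep
        have hx3 : CtxPre (x.1, Formula.atom a ::ₘ Δ) y₀ := by
          rw [← hx2]; exact hx
        obtain ⟨q, Θ, hws, hq⟩ := send_match hx3
        refine ⟨State.comp (State.comp (Θ, (0 : Ctx)) q) (Θ0, (0 : Ctx)), ?_, ?_⟩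
        · rw [hy]
          exact weakStep_send_comp _ hws
        · refine ⟨q, Θ + Θ0, ?_, hx' ▸ hq⟩
          refine Prod.ext ?_ ?_ <;> simp [State.comp] <;> ac_rfl
    | recv a => exact absurd hα (by simp [Label.isNonRecv])
  · -- receive
    intro a x' hstep
    obtain ⟨B, Δx, hx2, hx'⟩ := step_recv_inv hstep
    have h2 : CtxPre (State.comp x ((0 : Ctx), ({Formula.atom a} : Ctx)))
        (State.comp y₀ ((0 : Ctx), ({Formula.atom a} : Ctx))) := ctxPre_comp _ _ _ hx
    have hred : Red (State.comp x ((0 : Ctx), ({Formula.atom a} : Ctx))) x' := by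
      have e : State.comp x ((0 : Ctx), ({Formula.atom a} : Ctx)) =
          (x.1, Formula.atom a ::ₘ Formula.limp a B ::ₘ Δx) := by
        refine Prod.ext (by simp [State.comp]) ?_
        simp [State.comp, hx2, add_singleton, Multiset.cons_swap]
      rw [e, hx']
      exact Red.comm _ _ _ _
    obtain ⟨w, hw1, hw2⟩ := ctxPre_red _ _ _ h2 hred
    refine ⟨State.comp w (Θ0, (0 : Ctx)), ?_, ⟨w, Θ0, rfl, hw2⟩⟩
    have := redStar_comp (Θ0, (0 : Ctx)) hw1
    have e : State.comp (State.comp y₀ ((0 : Ctx), ({Formula.atom a} : Ctx))) (Θ0, (0 : Ctx))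
        = (y.1, Formula.atom a ::ₘ y.2) := by
      rw [hy]
      refine Prod.ext ?_ ?_ <;> simp [State.comp, add_singleton]
    rw [e] at this
    exact weakTau_iff_redStar.2 this

lemma ctxPre_simPre {s t : State} (h : CtxPre s t) : SimPre s t :=
  ⟨RJunk, rjunk_isSimulation, ⟨t, 0, by rw [comp_zero], h⟩⟩

end LL
namespace LL

lemma simPre_isSim : IsSimulation SimPre := by
  rintro s t ⟨R, hR, hst⟩
  obtain ⟨c1, c2, c3, c4⟩ := hR s t hst
  refine ⟨?_, ?_, ?_, ?_⟩
  · intro hs; obtain ⟨G, h1, h2⟩ := c1 hs; exact ⟨G, h1, R, hR, h2⟩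
  · intro s₁ s₂ hsp; obtain ⟨t₁, t₂, h1, h2, h3⟩ := c2 s₁ s₂ hsp
    exact ⟨t₁, t₂, h1, ⟨R, hR, h2⟩, ⟨R, hR, h3⟩⟩
  · intro α s' hα hstep; obtain ⟨t', h1, h2⟩ := c3 α s' hα hstep
    exact ⟨t', h1, R, hR, h2⟩
  · intro a s' hstep; obtain ⟨t', h1, h2⟩ := c4 a s' hstep
    exact ⟨t', h1, R, hR, h2⟩

/-- Compositional closure of the simulation preorder. -/
def RComp (x y : State) : Prop :=
  ∃ s t u, x = State.comp s u ∧ y = State.comp t u ∧ SimPre s t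

lemma rcomp_isSimulation : IsSimulation RComp := by
  rintro x y ⟨s, t, u, rfl, rfl, hst⟩
  obtain ⟨c1, c2, c3, c4⟩ := simPre_isSim s t hst
  refine ⟨?_, ?_, ?_, ?_⟩
  · -- empty linear context
    intro hs
    simp only [State.comp] at hs
    have hs2 : s.2 = 0 := Multiset.le_zero.1 (hs ▸ le_add_right le_rfl)
    have hu2 : u.2 = 0 := Multiset.le_zero.1 (hs ▸ le_add_left le_rfl)
    obtain ⟨G, h1, h2⟩ := c1 hs2
    refine ⟨G + u.1, ?_, ⟨(s.1, 0), (G, 0), (u.1, 0), by simp [State.comp], by simp [State.comp],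
      h2⟩⟩
    have := weakTau_comp u h1
    have e : State.comp (G, (0 : Ctx)) u = (G + u.1, (0 : Ctx)) := by
      refine Prod.ext (by simp [State.comp]) (by simp [State.comp, hu2])
    rw [e] at this
    exact this
  · -- partition
    intro x₁ x₂ hsplit
    simp only [State.comp, Prod.mk.injEq] at hsplit
    obtain ⟨hg, hd⟩ := hsplit
    obtain ⟨A1, B1, C1, D1, e1, e2, e3, e4⟩ := riesz hg
    obtain ⟨A2, B2, C2, D2, f1, f2, f3, f4⟩ := riesz hd
    have hsAB : s = State.comp (A1, A2) (B1, B2) := by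
      refine Prod.ext (by simp [State.comp, e1]) (by simp [State.comp, f1])
    obtain ⟨t₁, t₂, h1, h2, h3⟩ := c2 (A1, A2) (B1, B2) hsAB
    refine ⟨State.comp t₁ (C1, C2), State.comp t₂ (D1, D2), ?_,
      ⟨(A1, A2), t₁, (C1, C2), by refine Prod.ext ?_ ?_ <;> simp [State.comp, e3, f3], rfl, h2⟩,
      ⟨(B1, B2), t₂, (D1, D2), by refine Prod.ext ?_ ?_ <;> simp [State.comp, e4, f4], rfl, h3⟩⟩
    have := weakTau_comp u h1
    have e : State.comp (State.comp t₁ t₂) u =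
        State.comp (State.comp t₁ (C1, C2)) (State.comp t₂ (D1, D2)) := by
      have hu : u = State.comp (C1, C2) (D1, D2) := by
        refine Prod.ext (by simp [State.comp, e2]) (by simp [State.comp, f2])
      rw [hu]
      refine Prod.ext ?_ ?_ <;> simp [State.comp] <;> ac_rfl
    rw [e] at this
    exact this
  · -- τ and send
    rintro α z hα hstep
    cases α with
    | recv a => exact absurd hα (by simp [Label.isNonRecv])
    | tau =>
        rcases red_decomp (red_of_step_tau hstep) with ⟨s', hred, rfl⟩ | ⟨u', hred, rfl⟩ |
          ⟨a, B, Δs, Δu, hssp, husp, rfl⟩ | ⟨a, B, Δs, Δu, hssp, husp, rfl⟩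
        · obtain ⟨t', h1, h2⟩ := c3 Label.tau s' trivial (step_tau_of_red hred)
          exact ⟨State.comp t' u, weakTau_comp u h1, ⟨s', t', u, rfl, rfl, h2⟩⟩
        · refine ⟨State.comp t u', ?_, ⟨s, t, u', rfl, rfl, hst⟩⟩
          refine Relation.ReflTransGen.single (step_tau_of_red ?_)
          rw [comp_comm t u, comp_comm t u']
          exact red_comp t hred
        · -- s sends, u receives
          have hsend : Step s (Label.send a) (s.1, Δs) := by
            have : s = (s.1, Formula.atom a ::ₘ Δs) := by rw [← hssp]
            rw [this]
            exact Step.send _ _ _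
          have hrecv : Step u (Label.recv a) (u.1, B ::ₘ Δu) := by
            have : u = (u.1, Formula.limp a B ::ₘ Δu) := by rw [← husp]
            rw [this]
            exact Step.recv _ _ _ _
          obtain ⟨t', h1, h2⟩ := c3 (Label.send a) (s.1, Δs) trivial hsend
          obtain ⟨m, n, tau1, st, tau2⟩ := h1
          refine ⟨State.comp t' (u.1, B ::ₘ Δu), ?_, ⟨(s.1, Δs), t', (u.1, B ::ₘ Δu),
            by simp [State.comp], rfl, h2⟩⟩
          show WeakTau (State.comp t u) (State.comp t' (u.1, B ::ₘ Δu))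
          exact ((weakTau_comp u tau1).trans
            (Relation.ReflTransGen.single (Step.comm st hrecv))).trans
            (weakTau_comp (u.1, B ::ₘ Δu) tau2)
        · -- s receives, u sends
          have hrecv : Step s (Label.recv a) (s.1, B ::ₘ Δs) := by
            have : s = (s.1, Formula.limp a B ::ₘ Δs) := by rw [← hssp]
            rw [this]
            exact Step.recv _ _ _ _
          obtain ⟨t', h1, h2⟩ := c4 a (s.1, B ::ₘ Δs) hrecv
          refine ⟨State.comp t' (u.1, Δu), ?_, ⟨(s.1, B ::ₘ Δs), t', (u.1, Δu),
            by simp [State.comp, Multiset.cons_add], rfl, h2⟩⟩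
          have e : State.comp t u = State.comp (t.1, Formula.atom a ::ₘ t.2) (u.1, Δu) := by
            refine Prod.ext (by simp [State.comp]) ?_
            simp [State.comp, husp, Multiset.cons_add, Multiset.add_cons]
          rw [e]
          exact weakTau_comp (u.1, Δu) h1
    | send a =>
        obtain ⟨E, hE, rfl⟩ := step_send_inv hstep
        simp only [State.comp] at hE
        rcases add_eq_cons hE with ⟨S', hS1, hS2⟩ | ⟨U', hU1, hU2⟩
        · have hsend : Step s (Label.send a) (s.1, S') := by
            have : s = (s.1, Formula.atom a ::ₘ S') := by rw [← hS1]
            rw [this]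
            exact Step.send _ _ _
          obtain ⟨t', h1, h2⟩ := c3 (Label.send a) (s.1, S') trivial hsend
          refine ⟨State.comp t' u, weakStep_send_comp u h1, ⟨(s.1, S'), t', u, ?_, rfl, h2⟩⟩
          refine Prod.ext (by simp [State.comp]) (by simp [State.comp, hS2])
        · have hstep2 : Step (State.comp t u) (Label.send a) (State.comp t (u.1, U')) := by
            have e : State.comp t u = (t.1 + u.1, Formula.atom a ::ₘ (t.2 + U')) := by
              refine Prod.ext (by simp [State.comp]) ?_
              simp [State.comp, hU1, Multiset.cons_add, Multiset.add_cons]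
            rw [e]
            exact Step.send _ _ _
          refine ⟨State.comp t (u.1, U'), ⟨_, _, Relation.ReflTransGen.refl, hstep2,
            Relation.ReflTransGen.refl⟩, ⟨s, t, (u.1, U'), ?_, rfl, hst⟩⟩
          refine Prod.ext (by simp [State.comp]) (by simp [State.comp, hU2])
  · -- receive
    intro a z hstep
    obtain ⟨B, E, hE, rfl⟩ := step_recv_inv hstep
    simp only [State.comp] at hE
    rcases add_eq_cons hE with ⟨S', hS1, hS2⟩ | ⟨U', hU1, hU2⟩
    · have hrecv : Step s (Label.recv a) (s.1, B ::ₘ S') := by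
        have : s = (s.1, Formula.limp a B ::ₘ S') := by rw [← hS1]
        rw [this]
        exact Step.recv _ _ _ _
      obtain ⟨t', h1, h2⟩ := c4 a (s.1, B ::ₘ S') hrecv
      refine ⟨State.comp t' u, ?_, ⟨(s.1, B ::ₘ S'), t', u, ?_, rfl, h2⟩⟩
      · have e : ((State.comp t u).1, Formula.atom a ::ₘ (State.comp t u).2) =
            State.comp (t.1, Formula.atom a ::ₘ t.2) u := by
          refine Prod.ext (by simp [State.comp]) (by simp [State.comp, Multiset.cons_add])
        rw [e]
        exact weakTau_comp u h1
      · refine Prod.ext (by simp [State.comp]) ?_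
        simp [State.comp, hS2, Multiset.cons_add]
    · refine ⟨State.comp t (u.1, B ::ₘ U'), ?_, ⟨s, t, (u.1, B ::ₘ U'), ?_, rfl, hst⟩⟩
      · refine Relation.ReflTransGen.single (step_tau_of_red ?_)
        have e : ((State.comp t u).1, Formula.atom a ::ₘ (State.comp t u).2) =
            (t.1 + u.1, Formula.atom a ::ₘ Formula.limp a B ::ₘ (t.2 + U')) := by
          refine Prod.ext (by simp [State.comp]) ?_
          simp [State.comp, hU1, Multiset.cons_add, Multiset.add_cons]
        rw [e]
        have e2 : State.comp t (u.1, B ::ₘ U') = (t.1 + u.1, B ::ₘ (t.2 + U')) := by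
          refine Prod.ext (by simp [State.comp]) (by simp [State.comp, Multiset.add_cons])
        rw [e2]
        exact Red.comm _ _ _ _
      · refine Prod.ext (by simp [State.comp]) ?_
        simp [State.comp, hU2, Multiset.cons_add]

end LL
namespace LL

lemma simPre_compositional : Compositional SimPre :=
  fun s t u h => ⟨RComp, rcomp_isSimulation, ⟨s, t, u, rfl, rfl, h⟩⟩

lemma simPre_barb : BarbPreserving SimPre := by
  intro s t a h hb
  obtain ⟨_, _, c3, _⟩ := simPre_isSim s t h
  have hs : s = (s.1, Formula.atom a ::ₘ s.2.erase (Formula.atom a)) :=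
    Prod.ext rfl (Multiset.cons_erase hb).symm
  have hstep : Step s (Label.send a) (s.1, s.2.erase (Formula.atom a)) := by
    have := Step.send s.1 (s.2.erase (Formula.atom a)) a
    rwa [← hs] at this
  obtain ⟨t', h1, _⟩ := c3 (Label.send a) _ trivial hstep
  obtain ⟨m, n, tau1, st, _⟩ := h1
  obtain ⟨E, hE, _⟩ := step_send_inv st
  exact ⟨m, weakTau_iff_redStar.1 tau1, by rw [Barb, hE]; exact Multiset.mem_cons_self _ _⟩

lemma simPre_red : ReductionClosed SimPre := by
  intro s t s' h hred
  obtain ⟨_, _, c3, _⟩ := simPre_isSim s t h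
  obtain ⟨t', h1, h2⟩ := c3 Label.tau s' trivial (step_tau_of_red hred)
  exact ⟨t', weakTau_iff_redStar.1 h1, h2⟩

lemma simPre_part : PartitionPreserving SimPre := by
  intro s t h
  obtain ⟨c1, c2, _, _⟩ := simPre_isSim s t h
  refine ⟨?_, ?_⟩
  · intro hs
    obtain ⟨G, h1, h2⟩ := c1 hs
    exact ⟨G, weakTau_iff_redStar.1 h1, h2⟩
  · intro s₁ s₂ hsp
    obtain ⟨t₁, t₂, h1, h2, h3⟩ := c2 s₁ s₂ hsp
    exact ⟨t₁, t₂, weakTau_iff_redStar.1 h1, h2, h3⟩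

lemma simPre_ctxPre {s t : State} (h : SimPre s t) : CtxPre s t :=
  ⟨SimPre, simPre_barb, simPre_red, simPre_compositional, simPre_part, h⟩

end LL

/-- the contextual preorder coincides with the simulation preorder. -/
theorem ctxPre_iff_simPre (s t : State) :
    CtxPre s t ↔ SimPre s t :=
  ⟨LL.ctxPre_simPre, LL.simPre_ctxPre⟩
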